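/- (Local convergence of arbitrary order) Let φ(x) = (1/p)‖x‖_p^p with p > 1, T: X ⇉ X* set-valued with nonempty zero set Z := zer T, and suppose the growth condition holds: there exist ρ, ν, δ > 0 such that x ∈ T⁻¹(v) and ‖v‖_q < δ implies dist_p(Z, x) ≤ ρ‖v‖_q^ν. Suppose x⁺ minimizes u ↦ ‖x − u‖_p over a half-space H containing Z, with v := ∇φ(x − x⁺) ∈ T(x⁺) and ‖v‖_q < δ. Then dist_p(Z, x⁺) ≤ ρ · dist_p(Z, x)^{ν(p−1)}. -/
import Mathlib


/-- The ℓᵖ norm on `ℝⁿ`. -/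
noncomputable def lpNormN (p : ℝ) {n : ℕ} (z : Fin n → ℝ) : ℝ :=
  (∑ i, |z i| ^ p) ^ (1 / p)

/-- The ℓᵖ distance from a point to a set. -/
noncomputable def lpDist (p : ℝ) {n : ℕ} (Z : Set (Fin n → ℝ)) (x : Fin n → ℝ) : ℝ :=
  sInf {r : ℝ | ∃ z ∈ Z, r = lpNormN p (x - z)}

/-- The gradient of `φ(x) = (1/p)‖x‖_p^p`. -/
noncomputable def gradLp17 (p : ℝ) {n : ℕ} (x : Fin n → ℝ) : Fin n → ℝ :=
  fun i => Real.sign (x i) * |x i| ^ (p - 1)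

lemma lpNormN_nonneg (p : ℝ) {n : ℕ} (z : Fin n → ℝ) : 0 ≤ lpNormN p z := by
  unfold lpNormN
  apply Real.rpow_nonneg
  apply Finset.sum_nonneg
  intro i _
  exact Real.rpow_nonneg (abs_nonneg _) _

lemma gradLp_norm {n : ℕ} (p q : ℝ) (hp : 1 < p) (hq : q = p / (p - 1)) (t : Fin n → ℝ) :
    lpNormN q (gradLp17 p t) = lpNormN p t ^ (p - 1) := by
  have hp1 : (0:ℝ) < p - 1 := by linarith
  have hp0 : (0:ℝ) < p := by linarith
  have hqpos : 0 < q := by rw [hq]; positivity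
  have hpq : (p - 1) * q = p := by
    rw [hq]; field_simp
  have key : ∀ i, |gradLp17 p t i| ^ q = |t i| ^ p := by
    intro i
    unfold gradLp17
    rcases eq_or_ne (t i) 0 with h | h
    · simp [h, Real.zero_rpow hp1.ne', Real.zero_rpow hqpos.ne', Real.zero_rpow hp0.ne']
    · have hsign : |Real.sign (t i)| = 1 := by
        rcases lt_trichotomy (t i) 0 with hl | hl | hl
        · rw [Real.sign_of_neg hl]; norm_num
        · exact absurd hl h
        · rw [Real.sign_of_pos hl]; norm_num
      have habs : |t i| ^ (p - 1) ≥ 0 := Real.rpow_nonneg (abs_nonneg _) _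
      rw [abs_mul, hsign, one_mul, abs_of_nonneg habs,
        ← Real.rpow_mul (abs_nonneg _), hpq]
  unfold lpNormN
  have hsum : ∑ i, |gradLp17 p t i| ^ q = ∑ i, |t i| ^ p := by
    exact Finset.sum_congr rfl fun i _ => key i
  rw [hsum]
  have hS : 0 ≤ ∑ i, |t i| ^ p :=
    Finset.sum_nonneg fun i _ => Real.rpow_nonneg (abs_nonneg _) _
  rw [← Real.rpow_mul hS]
  congr 1
  rw [hq]
  field_simp

/-- Local convergence of arbitrary order `ν(p−1)` of the anisotropic proximal point
step under the Hölder growth condition. -/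
theorem stmt17 {n : ℕ} (p q ρ ν δ : ℝ) (hp : 1 < p) (hq : q = p / (p - 1))
    (hρ : 0 < ρ) (hν : 0 < ν) (hδ : 0 < δ)
    (T : (Fin n → ℝ) → Set (Fin n → ℝ))
    (Z : Set (Fin n → ℝ)) (hZdef : Z = {z | 0 ∈ T z}) (hZne : Z.Nonempty)
    (growth : ∀ x v, v ∈ T x → lpNormN q v < δ → lpDist p Z x ≤ ρ * lpNormN q v ^ ν)
    (H : Set (Fin n → ℝ)) (z0 nv : Fin n → ℝ) (hnv : nv ≠ 0)
    (hH : H = {w | ∑ i, (w i - z0 i) * nv i ≤ 0}) (hZH : Z ⊆ H)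
    (x xp : Fin n → ℝ) (hxp : xp ∈ H)
    (hmin : ∀ u ∈ H, lpNormN p (x - xp) ≤ lpNormN p (x - u))
    (hv : gradLp17 p (x - xp) ∈ T xp)
    (hsmall : lpNormN q (gradLp17 p (x - xp)) < δ) :
    lpDist p Z xp ≤ ρ * lpDist p Z x ^ (ν * (p - 1)) := by
  have h1 : lpDist p Z xp ≤ ρ * lpNormN q (gradLp17 p (x - xp)) ^ ν :=
    growth xp _ hv hsmall
  have h2 : lpNormN q (gradLp17 p (x - xp)) = lpNormN p (x - xp) ^ (p - 1) :=
    gradLp_norm p q hp hq _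
  have h3 : lpNormN p (x - xp) ≤ lpDist p Z x := by
    apply le_csInf
    · obtain ⟨z, hz⟩ := hZne
      exact ⟨lpNormN p (x - z), z, hz, rfl⟩
    · rintro r ⟨z, hz, rfl⟩
      exact hmin z (hZH hz)
  have hnn : 0 ≤ lpNormN p (x - xp) := lpNormN_nonneg _ _
  calc lpDist p Z xp ≤ ρ * (lpNormN p (x - xp) ^ (p - 1)) ^ ν := by rw [← h2]; exact h1
    _ = ρ * lpNormN p (x - xp) ^ ((p - 1) * ν) := by
        rw [← Real.rpow_mul hnn]
    _ ≤ ρ * lpDist p Z x ^ ((p - 1) * ν) := by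
        apply mul_le_mul_of_nonneg_left _ hρ.le
        exact Real.rpow_le_rpow hnn h3 (by nlinarith)
    _ = ρ * lpDist p Z x ^ (ν * (p - 1)) := by rw [mul_comm (p - 1) ν]
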